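/- If w is a parenthesis-shuffle (a prefix-shuffle whose two projections are balanced), then the binary tree λ₁(w) has exactly two active leaves: the first left leaf and the last right leaf. -/

import Mathlib

/-- The four letters `a, ā, b, b̄`. -/
inductive L4 : Type
  | a | abar | b | bbar
deriving DecidableEq

/-- Prefix-shuffles: every prefix has at least as many `a`'s as `ā`'s and
at least as many `b`'s as `b̄`'s. -/
def IsPrefixShuffle (w : List L4) : Prop :=
  ∀ p ∈ w.inits, p.count L4.abar ≤ p.count L4.a ∧ p.count L4.bbar ≤ p.count L4.b

/-- Binary trees whose leaves carry an activity flag (`true` = active). -/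
inductive BT : Type
  | leaf : Bool → BT
  | node : BT → BT → BT
deriving DecidableEq

/-- `B₁`: a single node with two active leaves. -/
def B1 : BT := BT.node (BT.leaf true) (BT.leaf true)

/-- Apply `g` to the first (in contour/preorder) active leaf whose side is `want`
(`true` = left leaf, `false` = right leaf); `side` is the side of the current subtree. -/
def goFirst (want : Bool) (g : Bool → BT) : Bool → BT → Option BT
  | side, BT.leaf act => if act && (side == want) then some (g act) else none
  | _, BT.node l r =>
    match goFirst want g true l with
    | some l' => some (BT.node l' r)
    | none => (goFirst want g false r).map (fun r' => BT.node l r')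

/-- Apply `g` to the last (in contour/preorder) active leaf whose side is `want`. -/
def goLast (want : Bool) (g : Bool → BT) : Bool → BT → Option BT
  | side, BT.leaf act => if act && (side == want) then some (g act) else none
  | _, BT.node l r =>
    match goLast want g false r with
    | some r' => some (BT.node l r')
    | none => (goLast want g true l).map (fun l' => BT.node l' r)

/-- One step of the recursive construction of `λ₁`:
`a` replaces the last active left leaf by `B₁`, `b` replaces the first active right
leaf by `B₁`, `ā` inactivates the first active right leaf, `b̄` inactivates the last
active left leaf.  (The root position counts as left.) -/
def lamStep (t : BT) : L4 → BT
  | L4.a => (goLast true (fun _ => B1) true t).getD t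
  | L4.b => (goFirst false (fun _ => B1) true t).getD t
  | L4.abar => (goFirst false (fun _ => BT.leaf false) true t).getD t
  | L4.bbar => (goLast true (fun _ => BT.leaf false) true t).getD t

/-- The binary tree `λ₁(w)`. -/
def lam1 (w : List L4) : BT := w.foldl lamStep B1

/-- The list of leaves in contour (preorder) order; each leaf is recorded as
`(side, active)` with `side = true` meaning a left leaf. -/
def leavesList : Bool → BT → List (Bool × Bool)
  | side, BT.leaf act => [(side, act)]
  | _, BT.node l r => leavesList true l ++ leavesList false r

/-- A parenthesis-shuffle: a prefix-shuffle whose two projections are balanced. -/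
def IsShuffle (w : List L4) : Prop :=
  IsPrefixShuffle w ∧ w.count L4.a = w.count L4.abar ∧ w.count L4.b = w.count L4.bbar


/-! ### Auxiliary machinery -/

abbrev PP := Bool × Bool
abbrev Lft : PP := (true, true)
abbrev Rgt : PP := (false, true)

def lFirst (want : Bool) (rep : Bool → List PP) : List PP → Option (List PP)
  | [] => none
  | p :: l => if p.1 = want ∧ p.2 then some (rep p.1 ++ l)
      else (lFirst want rep l).map (p :: ·)

def lLast (want : Bool) (rep : Bool → List PP) : List PP → Option (List PP)
  | [] => none
  | p :: l =>
    match lLast want rep l with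
    | some l' => some (p :: l')
    | none => if p.1 = want ∧ p.2 then some (rep p.1 ++ l) else none

theorem lFirst_append (want rep) (l1 l2 : List PP) :
    lFirst want rep (l1 ++ l2) =
      match lFirst want rep l1 with
      | some l1' => some (l1' ++ l2)
      | none => (lFirst want rep l2).map (l1 ++ ·) := by
  induction l1 with
  | nil => simp [lFirst]
  | cons p l ih =>
    by_cases h : p.1 = want ∧ p.2
    · simp [lFirst, h]
    · cases hl : lFirst want rep l <;> cases hl2 : lFirst want rep l2 <;>
        rw [hl, hl2] at ih <;> simp at ih <;>
        simp [lFirst, if_neg h, ih, hl, hl2]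

theorem lLast_append (want rep) (l1 l2 : List PP) :
    lLast want rep (l1 ++ l2) =
      match lLast want rep l2 with
      | some l2' => some (l1 ++ l2')
      | none => (lLast want rep l1).map (· ++ l2) := by
  induction l1 with
  | nil =>
    cases hl2 : lLast want rep l2 <;> simp [lLast, hl2]
  | cons p l ih =>
    cases hl2 : lLast want rep l2 <;> cases hl : lLast want rep l <;>
      rw [hl, hl2] at ih <;> simp at ih <;>
      by_cases h : p.1 = want ∧ p.2 <;>
      simp [lLast, ih, hl, hl2, h]

theorem goFirst_leaves (want : Bool) (g : Bool → BT) (t : BT) (s : Bool) :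
    (goFirst want g s t).map (leavesList s) =
      lFirst want (fun s' => leavesList s' (g true)) (leavesList s t) := by
  induction t generalizing s with
  | leaf act =>
    cases act <;> by_cases hs : s = want <;>
      simp [goFirst, leavesList, lFirst, hs]
  | node l r ihl ihr =>
    simp only [leavesList, lFirst_append, ← ihl, ← ihr, goFirst]
    cases goFirst want g true l <;> cases goFirst want g false r <;>
      simp [leavesList]

theorem goLast_leaves (want : Bool) (g : Bool → BT) (t : BT) (s : Bool) :
    (goLast want g s t).map (leavesList s) =
      lLast want (fun s' => leavesList s' (g true)) (leavesList s t) := by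
  induction t generalizing s with
  | leaf act =>
    cases act <;> by_cases hs : s = want <;>
      simp [goLast, leavesList, lLast, hs]
  | node l r ihl ihr =>
    simp only [leavesList, lLast_append, ← ihl, ← ihr, goLast]
    cases goLast want g true l <;> cases goLast want g false r <;>
      simp [leavesList]

theorem lFirst_eq_none {want rep} {l : List PP}
    (h : ∀ p ∈ l, ¬(p.1 = want ∧ p.2 = true)) : lFirst want rep l = none := by
  induction l with
  | nil => rfl
  | cons p l ih =>
    rw [lFirst, if_neg (h p (List.mem_cons_self)),
      ih (fun q hq => h q (List.mem_cons_of_mem _ hq))]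
    rfl

theorem lLast_eq_none {want rep} {l : List PP}
    (h : ∀ p ∈ l, ¬(p.1 = want ∧ p.2 = true)) : lLast want rep l = none := by
  induction l with
  | nil => rfl
  | cons p l ih =>
    rw [lLast, ih (fun q hq => h q (List.mem_cons_of_mem _ hq)),
      if_neg (h p (List.mem_cons_self))]

theorem lFirst_eq_some {want : Bool} {rep} {x y : List PP}
    (hx : ∀ p ∈ x, ¬(p.1 = want ∧ p.2 = true)) :
    lFirst want rep (x ++ (want, true) :: y) = some (x ++ rep want ++ y) := by
  induction x with
  | nil => simp [lFirst]
  | cons p x ih =>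
    rw [List.cons_append, lFirst, if_neg (hx p (List.mem_cons_self)),
      ih (fun q hq => hx q (List.mem_cons_of_mem _ hq))]
    simp

theorem lLast_eq_some {want : Bool} {rep} {x y : List PP}
    (hy : ∀ p ∈ y, ¬(p.1 = want ∧ p.2 = true)) :
    lLast want rep (x ++ (want, true) :: y) = some (x ++ rep want ++ y) := by
  induction x with
  | nil =>
    rw [List.nil_append, lLast, lLast_eq_none hy, if_pos (by simp)]
    simp
  | cons p x ih =>
    rw [List.cons_append, lLast, ih]
    simp

def InvL (nl nr : ℕ) (l : List PP) : Prop :=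
  l.filter (fun p => p.2) = List.replicate nl Lft ++ List.replicate nr Rgt ∧
  l.head? = some Lft ∧ l.getLast? = some Rgt

theorem filter_split {α : Type*} {q : α → Bool} {l s : List α} {a : α}
    (h : l.filter q = a :: s) :
    ∃ x y, l = x ++ a :: y ∧ (∀ p ∈ x, ¬ q p) ∧ y.filter q = s := by
  induction l with
  | nil => simp at h
  | cons c l ih =>
    by_cases hc : q c
    · rw [List.filter_cons_of_pos hc] at h
      obtain ⟨rfl, rfl⟩ : c = a ∧ l.filter q = s :=
        ⟨(List.cons.inj h).1, (List.cons.inj h).2⟩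
      exact ⟨[], l, rfl, by simp, rfl⟩
    · rw [List.filter_cons_of_neg hc] at h
      obtain ⟨x, y, rfl, hx, hy⟩ := ih h
      exact ⟨c :: x, y, rfl, by simpa [hc] using hx, hy⟩

theorem filter_split_last {α : Type*} {q : α → Bool} {l s : List α} {a : α}
    (h : l.filter q = s ++ [a]) :
    ∃ x y, l = x ++ a :: y ∧ (∀ p ∈ y, ¬ q p) ∧ x.filter q = s := by
  have h' : l.reverse.filter q = a :: s.reverse := by
    rw [List.filter_reverse, h]; simp
  obtain ⟨x, y, hxy, hx, hy⟩ := filter_split h'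
  refine ⟨y.reverse, x.reverse, ?_, by simpa using hx, ?_⟩
  · have := congrArg List.reverse hxy
    simpa using this
  · have := congrArg List.reverse hy
    rw [← List.filter_reverse] at this
    simpa using this

theorem rep_split {α : Type*} {a b : α} (hab : a ≠ b) {u v : List α} {m n : ℕ}
    (h : u ++ b :: v = List.replicate m a ++ List.replicate n b) (hu : b ∉ u) :
    u = List.replicate m a ∧ b :: v = List.replicate n b := by
  induction u generalizing m with
  | nil =>
    cases m with
    | zero => exact ⟨rfl, by simpa using h⟩
    | succ k =>
      rw [List.replicate_succ] at h
      exact absurd (List.cons.inj (by simpa using h)).1 (Ne.symm hab)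
  | cons c u ih =>
    cases m with
    | zero =>
      exfalso
      simp only [List.replicate_zero, List.nil_append, List.cons_append] at h
      cases n with
      | zero => simp at h
      | succ k =>
        rw [List.replicate_succ] at h
        have hc := (List.cons.inj h).1
        simp [hc] at hu
    | succ k =>
      rw [List.replicate_succ] at h
      obtain ⟨rfl, h2⟩ := List.cons.inj h
      obtain ⟨h3, h4⟩ := ih (by simpa using h2) (fun hb => hu (List.mem_cons_of_mem _ hb))
      exact ⟨by rw [List.replicate_succ, h3], h4⟩

theorem inv_split_first {nl nr : ℕ} {l : List PP} (h : InvL nl (nr+1) l) (hnl : 1 ≤ nl) :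
    ∃ x y, l = x ++ Rgt :: y ∧ (∀ p ∈ x, ¬(p.1 = false ∧ p.2 = true)) ∧
      x ≠ [] ∧
      x.filter (fun p => p.2) = List.replicate nl Lft ∧
      y.filter (fun p => p.2) = List.replicate nr Rgt := by
  obtain ⟨hf, hh, hlast⟩ := h
  have hqR : l.filter (fun p => !p.1 && p.2) = Rgt :: List.replicate nr Rgt := by
    have h0 : l.filter (fun p => !p.1 && p.2) =
        (l.filter (fun p => p.2)).filter (fun p => !p.1) := by
      rw [List.filter_filter]
    rw [h0, hf]
    simp [List.replicate_succ]
  obtain ⟨x, y, rfl, hx, -⟩ := filter_split hqR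
  have hx' : ∀ p ∈ x, ¬(p.1 = false ∧ p.2 = true) := by
    intro p hp hc
    exact hx p hp (by simp [hc.1, hc.2])
  have hfx : (x.filter (fun p => p.2)) ++ Rgt :: (y.filter (fun p => p.2)) =
      List.replicate nl Lft ++ List.replicate (nr+1) Rgt := by
    rw [← hf]; simp
  have hnoR : Rgt ∉ x.filter (fun p => p.2) := by
    intro hmem
    rw [List.mem_filter] at hmem
    exact hx' Rgt hmem.1 ⟨rfl, rfl⟩
  obtain ⟨h1, h2⟩ := rep_split (by decide) hfx hnoR
  have h2' : y.filter (fun p => p.2) = List.replicate nr Rgt := by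
    rw [List.replicate_succ] at h2
    exact (List.cons.inj h2).2
  refine ⟨x, y, rfl, hx', ?_, h1, h2'⟩
  intro hxnil
  subst hxnil
  simp at h1
  omega

theorem inv_split_last {nl nr : ℕ} {l : List PP} (h : InvL (nl+1) nr l) (hnr : 1 ≤ nr) :
    ∃ x y, l = x ++ Lft :: y ∧ (∀ p ∈ y, ¬(p.1 = true ∧ p.2 = true)) ∧
      y ≠ [] ∧
      x.filter (fun p => p.2) = List.replicate nl Lft ∧
      y.filter (fun p => p.2) = List.replicate nr Rgt := by
  obtain ⟨hf, hh, hlast⟩ := h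
  have hqL : l.filter (fun p => p.1 && p.2) = List.replicate nl Lft ++ [Lft] := by
    have h0 : l.filter (fun p => p.1 && p.2) =
        (l.filter (fun p => p.2)).filter (fun p => p.1) := by
      rw [List.filter_filter]
    rw [h0, hf]
    simp [← List.replicate_succ', List.replicate_succ']
  obtain ⟨x, y, rfl, hy, -⟩ := filter_split_last hqL
  have hy' : ∀ p ∈ y, ¬(p.1 = true ∧ p.2 = true) := by
    intro p hp hc
    exact hy p hp (by simp [hc.1, hc.2])
  have hfx : (x.filter (fun p => p.2)) ++ Lft :: (y.filter (fun p => p.2)) =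
      List.replicate (nl+1) Lft ++ List.replicate nr Rgt := by
    rw [← hf]; simp
  have hnoL : Lft ∉ y.filter (fun p => p.2) := by
    intro hmem
    rw [List.mem_filter] at hmem
    exact hy' Lft hmem.1 ⟨rfl, rfl⟩
  have hrev : (y.filter (fun p => p.2)).reverse ++ Lft :: (x.filter (fun p => p.2)).reverse =
      List.replicate nr Rgt ++ List.replicate (nl+1) Lft := by
    have := congrArg List.reverse hfx
    simpa [List.reverse_append] using this
  obtain ⟨h1, h2⟩ := rep_split (by decide) hrev (by simpa using hnoL)
  have hfy : y.filter (fun p => p.2) = List.replicate nr Rgt := by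
    have := congrArg List.reverse h1
    simpa using this
  have hfx2 : x.filter (fun p => p.2) = List.replicate nl Lft := by
    rw [List.replicate_succ] at h2
    have h3 := (List.cons.inj h2).2
    have := congrArg List.reverse h3
    simpa using this
  refine ⟨x, y, rfl, hy', ?_, hfx2, hfy⟩
  intro hynil
  subst hynil
  simp at hfy
  omega

def repB1 : Bool → List PP := fun _ => [Lft, Rgt]
def repDead : Bool → List PP := fun s => [(s, false)]

theorem getLast?_cons_of_ne_nil' {α : Type*} (a : α) {y : List α} (hy : y ≠ []) :
    (a :: y).getLast? = y.getLast? := by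
  rw [show a :: y = [a] ++ y from rfl, List.getLast?_append_of_ne_nil _ hy]

theorem step_b {nl nr : ℕ} {l : List PP} (h : InvL nl (nr+1) l) (hnl : 1 ≤ nl) :
    ∃ l', lFirst false repB1 l = some l' ∧ InvL (nl+1) (nr+1) l' := by
  obtain ⟨x, y, hl, hx, hxne, hfx, hfy⟩ := inv_split_first h hnl
  obtain ⟨hf, hh, hlast⟩ := h
  subst hl
  refine ⟨x ++ repB1 false ++ y, lFirst_eq_some hx, ?_, ?_, ?_⟩
  · simp only [repB1, List.filter_append, hfx, hfy, List.append_assoc]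
    rw [List.replicate_succ' (n := nl)]
    simp [List.replicate_succ]
  · rw [List.append_assoc, List.head?_append_of_ne_nil _ hxne]
    rw [List.head?_append_of_ne_nil _ hxne] at hh
    exact hh
  · rw [List.append_assoc, List.getLast?_append_of_ne_nil _ (by simp [repB1, repDead])]
    rw [List.getLast?_append_of_ne_nil _ (by simp)] at hlast
    cases y with
    | nil => simp [repB1]
    | cons c ys =>
      rw [getLast?_cons_of_ne_nil' _ (by simp)] at hlast
      rw [show repB1 false ++ c :: ys = Lft :: Rgt :: c :: ys from rfl,
        getLast?_cons_of_ne_nil' _ (by simp), getLast?_cons_of_ne_nil' _ (by simp)]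
      exact hlast

theorem step_abar {nl nr : ℕ} {l : List PP} (h : InvL nl (nr+1) l) (hnl : 1 ≤ nl)
    (hnr : 1 ≤ nr) :
    ∃ l', lFirst false repDead l = some l' ∧ InvL nl nr l' := by
  obtain ⟨x, y, hl, hx, hxne, hfx, hfy⟩ := inv_split_first h hnl
  obtain ⟨hf, hh, hlast⟩ := h
  subst hl
  have hyne : y ≠ [] := by
    intro hynil; subst hynil; simp at hfy; omega
  refine ⟨x ++ repDead false ++ y, lFirst_eq_some hx, ?_, ?_, ?_⟩
  · simp only [repDead, List.filter_append, hfx, hfy, List.append_assoc]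
    simp
  · rw [List.append_assoc, List.head?_append_of_ne_nil _ hxne]
    rw [List.head?_append_of_ne_nil _ hxne] at hh
    exact hh
  · rw [List.append_assoc, List.getLast?_append_of_ne_nil _ (by simp [repB1, repDead])]
    rw [List.getLast?_append_of_ne_nil _ (by simp)] at hlast
    rw [getLast?_cons_of_ne_nil' _ hyne] at hlast
    rw [show repDead false ++ y = (false, false) :: y from rfl,
      getLast?_cons_of_ne_nil' _ hyne]
    exact hlast

theorem step_a {nl nr : ℕ} {l : List PP} (h : InvL (nl+1) nr l) (hnr : 1 ≤ nr) :
    ∃ l', lLast true repB1 l = some l' ∧ InvL (nl+1) (nr+1) l' := by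
  obtain ⟨x, y, hl, hy, hyne, hfx, hfy⟩ := inv_split_last h hnr
  obtain ⟨hf, hh, hlast⟩ := h
  subst hl
  refine ⟨x ++ repB1 true ++ y, lLast_eq_some hy, ?_, ?_, ?_⟩
  · simp only [repB1, List.filter_append, hfx, hfy, List.append_assoc]
    rw [List.replicate_succ' (n := nl)]
    simp [List.replicate_succ]
  · cases x with
    | nil => simpa [repB1] using hh
    | cons c xs =>
      rw [List.append_assoc, List.head?_append_of_ne_nil _ (by simp)]
      rw [List.head?_append_of_ne_nil _ (by simp)] at hh
      exact hh
  · rw [List.append_assoc, List.getLast?_append_of_ne_nil _ (by simp [repB1, repDead])]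
    rw [List.getLast?_append_of_ne_nil _ (by simp)] at hlast
    rw [getLast?_cons_of_ne_nil' _ hyne] at hlast
    rw [show repB1 true ++ y = Lft :: Rgt :: y from rfl,
      getLast?_cons_of_ne_nil' _ (by simp), getLast?_cons_of_ne_nil' _ hyne]
    exact hlast

theorem step_bbar {nl nr : ℕ} {l : List PP} (h : InvL (nl+2) nr l) (hnr : 1 ≤ nr) :
    ∃ l', lLast true repDead l = some l' ∧ InvL (nl+1) nr l' := by
  obtain ⟨x, y, hl, hy, hyne, hfx, hfy⟩ := inv_split_last h hnr
  obtain ⟨hf, hh, hlast⟩ := h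
  subst hl
  have hxne : x ≠ [] := by
    intro hxnil; subst hxnil; simp at hfx
  refine ⟨x ++ repDead true ++ y, lLast_eq_some hy, ?_, ?_, ?_⟩
  · simp only [repDead, List.filter_append, hfx, hfy, List.append_assoc]
    simp
  · rw [List.append_assoc, List.head?_append_of_ne_nil _ hxne]
    rw [List.head?_append_of_ne_nil _ hxne] at hh
    exact hh
  · rw [List.append_assoc, List.getLast?_append_of_ne_nil _ (by simp [repB1, repDead])]
    rw [List.getLast?_append_of_ne_nil _ (by simp)] at hlast
    rw [getLast?_cons_of_ne_nil' _ hyne] at hlast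
    rw [show repDead true ++ y = (true, false) :: y from rfl,
      getLast?_cons_of_ne_nil' _ hyne]
    exact hlast

theorem leaves_getD_first {g : Bool → BT} {rep : Bool → List PP} {t : BT} {l' : List PP}
    (hrep : (fun s' => leavesList s' (g true)) = rep)
    (hsome : lFirst false rep (leavesList true t) = some l') :
    leavesList true ((goFirst false g true t).getD t) = l' := by
  have hmap := goFirst_leaves false g t true
  rw [hrep, hsome] at hmap
  cases hgo : goFirst false g true t with
  | none => rw [hgo] at hmap; simp at hmap
  | some t' =>
    rw [hgo] at hmap
    simpa using hmap

theorem leaves_getD_last {g : Bool → BT} {rep : Bool → List PP} {t : BT} {l' : List PP}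
    (hrep : (fun s' => leavesList s' (g true)) = rep)
    (hsome : lLast true rep (leavesList true t) = some l') :
    leavesList true ((goLast true g true t).getD t) = l' := by
  have hmap := goLast_leaves true g t true
  rw [hrep, hsome] at hmap
  cases hgo : goLast true g true t with
  | none => rw [hgo] at hmap; simp at hmap
  | some t' =>
    rw [hgo] at hmap
    simpa using hmap

theorem lam1_invariant (w : List L4) (hw : IsPrefixShuffle w) :
    ∃ nl nr : ℕ, nl + w.count L4.bbar = 1 + w.count L4.b ∧
      nr + w.count L4.abar = 1 + w.count L4.a ∧
      InvL nl nr (leavesList true (lam1 w)) := by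
  induction w using List.reverseRecOn with
  | nil =>
    exact ⟨1, 1, by simp, by simp, by constructor <;> [decide; constructor <;> decide]⟩
  | append_singleton w' c ih =>
    have hw' : IsPrefixShuffle w' := by
      intro p hp
      refine hw p ?_
      rw [List.mem_inits] at hp ⊢
      exact hp.trans (List.prefix_append w' [c])
    obtain ⟨nl, nr, hbl, hal, hInv⟩ := ih hw'
    have hpos := hw' w' (by rw [List.mem_inits])
    have hself := hw (w' ++ [c]) (by rw [List.mem_inits])
    have hlam : lam1 (w' ++ [c]) = lamStep (lam1 w') c := by
      simp [lam1, List.foldl_append]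
    cases c with
    | a =>
      have hnl : 1 ≤ nl := by omega
      have hnr : 1 ≤ nr := by omega
      obtain ⟨m, rfl⟩ : ∃ m, nl = m + 1 := ⟨nl - 1, by omega⟩
      obtain ⟨l', hsome, hInv'⟩ := step_a hInv hnr
      refine ⟨m + 1, nr + 1, ?_, ?_, ?_⟩
      · simp [List.count_append]; omega
      · simp [List.count_append]; omega
      · rw [hlam]
        show InvL _ _ (leavesList true ((goLast true (fun _ => B1) true (lam1 w')).getD (lam1 w')))
        rw [leaves_getD_last (by funext s'; rfl) hsome]
        exact hInv'
    | b =>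
      have hnl : 1 ≤ nl := by omega
      have hnr : 1 ≤ nr := by omega
      obtain ⟨m, rfl⟩ : ∃ m, nr = m + 1 := ⟨nr - 1, by omega⟩
      obtain ⟨l', hsome, hInv'⟩ := step_b hInv hnl
      refine ⟨nl + 1, m + 1, ?_, ?_, ?_⟩
      · simp [List.count_append]; omega
      · simp [List.count_append]; omega
      · rw [hlam]
        show InvL _ _ (leavesList true ((goFirst false (fun _ => B1) true (lam1 w')).getD (lam1 w')))
        rw [leaves_getD_first (by funext s'; rfl) hsome]
        exact hInv'
    | abar =>
      have hnl : 1 ≤ nl := by omega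
      have hca : w'.count L4.abar + 1 ≤ w'.count L4.a := by
        have := hself.1
        simp [List.count_append] at this
        omega
      have hnr2 : 2 ≤ nr := by omega
      obtain ⟨m, rfl⟩ : ∃ m, nr = m + 1 + 1 := ⟨nr - 2, by omega⟩
      obtain ⟨l', hsome, hInv'⟩ := step_abar hInv hnl (by omega)
      refine ⟨nl, m + 1, ?_, ?_, ?_⟩
      · simp [List.count_append]; omega
      · simp [List.count_append]; omega
      · rw [hlam]
        show InvL _ _ (leavesList true ((goFirst false (fun _ => BT.leaf false) true (lam1 w')).getD (lam1 w')))
        rw [leaves_getD_first (by funext s'; rfl) hsome]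
        exact hInv'
    | bbar =>
      have hnr : 1 ≤ nr := by omega
      have hcb : w'.count L4.bbar + 1 ≤ w'.count L4.b := by
        have := hself.2
        simp [List.count_append] at this
        omega
      have hnl2 : 2 ≤ nl := by omega
      obtain ⟨m, rfl⟩ : ∃ m, nl = m + 2 := ⟨nl - 2, by omega⟩
      obtain ⟨l', hsome, hInv'⟩ := step_bbar hInv hnr
      refine ⟨m + 1, nr, ?_, ?_, ?_⟩
      · simp [List.count_append]; omega
      · simp [List.count_append]; omega
      · rw [hlam]
        show InvL _ _ (leavesList true ((goLast true (fun _ => BT.leaf false) true (lam1 w')).getD (lam1 w')))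
        rw [leaves_getD_last (by funext s'; rfl) hsome]
        exact hInv'

theorem final_shape {l : List PP} (h : InvL 1 1 l) :
    ∃ mid : List PP, l = Lft :: (mid ++ [Rgt]) ∧ ∀ p ∈ mid, p.2 = false := by
  obtain ⟨hf, hh, hlast⟩ := h
  obtain ⟨c, t, rfl⟩ : ∃ c t, l = c :: t := by
    cases l with
    | nil => simp at hh
    | cons c t => exact ⟨c, t, rfl⟩
  have hc : c = Lft := by simpa using hh
  subst hc
  have hft : t.filter (fun p => p.2) = [Rgt] := by
    rw [List.filter_cons_of_pos (by decide)] at hf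
    simpa using hf
  have htne : t ≠ [] := by
    intro h0; subst h0; simp at hft
  obtain ⟨mid, d, rfl⟩ : ∃ mid d, t = mid ++ [d] := ⟨t.dropLast, t.getLast htne,
    (List.dropLast_append_getLast htne).symm⟩
  have hd : d = Rgt := by
    rw [getLast?_cons_of_ne_nil' _ (by simp)] at hlast
    rw [List.getLast?_append_of_ne_nil _ (by simp)] at hlast
    simpa using hlast
  subst hd
  refine ⟨mid, rfl, ?_⟩
  have h5 : mid.filter (fun p => p.2) ++ [Rgt] = [Rgt] := by
    simpa [List.filter_append] using hft
  have hlen := congrArg List.length h5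
  simp only [List.length_append, List.length_cons, List.length_nil] at hlen
  have hmidnil : mid.filter (fun p => p.2) = [] :=
    List.eq_nil_of_length_eq_zero (by omega)
  intro p hp
  have := List.filter_eq_nil_iff.1 hmidnil p hp
  simpa using this


/-- If `w` is a parenthesis-shuffle then the active leaves of `λ₁(w)` are exactly the
first left leaf and the last right leaf. -/
theorem lam1_two_active_leaves (w : List L4) (hw : IsShuffle w) :
    ∀ i : ℕ, ∀ hi : i < (leavesList true (lam1 w)).length,
      ((leavesList true (lam1 w)).get ⟨i, hi⟩).2 = true ↔
        (i = (leavesList true (lam1 w)).findIdx (fun p => p.1) ∨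
         i = (leavesList true (lam1 w)).length - 1 -
              (leavesList true (lam1 w)).reverse.findIdx (fun p => !p.1)) := by
  obtain ⟨hps, ha, hb⟩ := hw
  obtain ⟨nl, nr, hbl, hal, hInv⟩ := lam1_invariant w hps
  have hnl : nl = 1 := by omega
  have hnr : nr = 1 := by omega
  rw [hnl, hnr] at hInv
  obtain ⟨mid, hl, hmid⟩ := final_shape hInv
  intro i
  rw [hl]
  intro hi
  have h1 : ((Lft : PP) :: (mid ++ [Rgt])).findIdx (fun p => p.1) = 0 := by
    simp [List.findIdx_cons]
  have h2 : ((Lft : PP) :: (mid ++ [Rgt])).reverse.findIdx (fun p => !p.1) = 0 := by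
    rw [show ((Lft : PP) :: (mid ++ [Rgt])).reverse = Rgt :: (mid.reverse ++ [Lft]) from by simp]
    simp [List.findIdx_cons]
  have h4 : ((Lft : PP) :: (mid ++ [Rgt])).length - 1 - 0 = mid.length + 1 := by
    simp
  rw [h1, h2, h4]
  have hi' : i < mid.length + 2 := by simp at hi; omega
  cases i with
  | zero => simp
  | succ n =>
    have hget : ((Lft : PP) :: (mid ++ [Rgt])).get ⟨n + 1, hi⟩ =
        (mid ++ [Rgt])[n]'(by simpa using hi') := rfl
    rw [hget]
    by_cases hn : n < mid.length
    · rw [List.getElem_append_left hn]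
      have hf : (mid[n]'hn).2 = false := hmid _ (List.getElem_mem hn)
      refine iff_of_false (by simp [hf]) ?_
      rintro (h | h) <;> omega
    · have hn' : n = mid.length := by omega
      subst hn'
      rw [List.getElem_append_right (le_refl _)]
      simp
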